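/- The CRSD mechanism is family-strategyproof: for every family i, every profile of preference orders of the other families, every random order of the families, and every preference order that i could misreport, the location that i receives when reporting its true preference order is weakly preferred (according to i's true preference order) to the location it receives under any misreport. -/

import Mathlib

open Classical

/-- A matching is feasible if each location `j` hosts exactly `q j` families. -/
def feasible {F L : Type} [Fintype F] [DecidableEq L] (q : L → ℕ) (μ : F → L) : Prop :=
  ∀ j : L, (Finset.univ.filter (fun i => μ i = j)).card = q j

/-- The government objective: expected number of successfully integrated families. -/
def z {F L : Type} [Fintype F] (π : F → L → ℝ) (μ : F → L) : ℝ :=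
  ∑ i, π i (μ i)

/-- `μ'` extends the partial matching `p`. -/
def ExtendsP {F L : Type} (μ' : F → L) (p : F → Option L) : Prop :=
  ∀ i j, p i = some j → μ' i = j

/-- There is a feasible completion of the partial matching `p` with objective at least `c`. -/
def okExt {F L : Type} [Fintype F] [DecidableEq L] (q : L → ℕ) (π : F → L → ℝ)
    (c : ℝ) (p : F → Option L) : Prop :=
  ∃ μ' : F → L, feasible q μ' ∧ ExtendsP μ' p ∧ c ≤ z π μ'

/-- Number of families currently assigned to location `j`. -/
def assignedCount {F L : Type} [Fintype F] [DecidableEq L] (p : F → Option L) (j : L) : ℕ :=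
  (Finset.univ.filter (fun i => p i = some j)).card

/-- One step of CRSD: family `i` is assigned to the first location in its preference list
that has remaining capacity and preserves achievability of objective value `c`. -/
noncomputable def crsdStep {F L : Type} [Fintype F] [DecidableEq F] [DecidableEq L]
    (q : L → ℕ) (π : F → L → ℝ) (c : ℝ) (prefs : F → List L)
    (p : F → Option L) (i : F) : F → Option L :=
  match (prefs i).find? (fun j =>
      decide (assignedCount p j < q j ∧ okExt q π c (Function.update p i (some j)))) with
  | some j => Function.update p i (some j)
  | none => p

/-- Running CRSD on the (random) order `order` of families, starting from the empty matching. -/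
noncomputable def crsdRun {F L : Type} [Fintype F] [DecidableEq F] [DecidableEq L]
    (q : L → ℕ) (π : F → L → ℝ) (c : ℝ) (prefs : F → List L)
    (order : List F) : F → Option L :=
  order.foldl (crsdStep q π c prefs) (fun _ => none)

lemma find?_idxOf_le {α : Type} [DecidableEq α] (P : α → Bool) :
    ∀ (l : List α) (a b : α), l.find? P = some a → b ∈ l → P b = true →
      l.idxOf a ≤ l.idxOf b := by
  intro l
  induction l with
  | nil => intro a b h; simp at h
  | cons x xs ih =>
    intro a b h hb hPb
    by_cases hx : P x = true
    · rw [List.find?_cons_of_pos hx] at h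
      cases h
      simp [List.idxOf_cons_self]
    · rw [List.find?_cons_of_neg hx] at h
      have hPa := List.find?_some h
      have hax : a ≠ x := fun e => hx (e ▸ hPa)
      have hbx : b ≠ x := fun e => hx (e ▸ hPb)
      have hbmem : b ∈ xs := by
        rcases List.mem_cons.mp hb with h' | h'
        · exact absurd h' hbx
        · exact h'
      have e1 : (x :: xs).idxOf a = xs.idxOf a + 1 := by
        rw [List.idxOf_cons, beq_false_of_ne (Ne.symm hax)]; rfl
      have e2 : (x :: xs).idxOf b = xs.idxOf b + 1 := by
        rw [List.idxOf_cons, beq_false_of_ne (Ne.symm hbx)]; rfl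
      rw [e1, e2]
      exact Nat.succ_le_succ (ih a b h hbmem hPb)

lemma crsdStep_other {F L : Type} [Fintype F] [DecidableEq F] [DecidableEq L]
    (q : L → ℕ) (π : F → L → ℝ) (c : ℝ) (prefs : F → List L)
    (p : F → Option L) (k i : F) (hki : k ≠ i) :
    crsdStep q π c prefs p k i = p i := by
  unfold crsdStep
  cases h : (prefs k).find? (fun j =>
      decide (assignedCount p j < q j ∧ okExt q π c (Function.update p k (some j)))) with
  | none => rfl
  | some j => exact Function.update_of_ne (Ne.symm hki) _ _

lemma crsdFoldl_other {F L : Type} [Fintype F] [DecidableEq F] [DecidableEq L]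
    (q : L → ℕ) (π : F → L → ℝ) (c : ℝ) (prefs : F → List L) (i : F) :
    ∀ (l : List F) (p : F → Option L), i ∉ l →
      l.foldl (crsdStep q π c prefs) p i = p i := by
  intro l
  induction l with
  | nil => intro p _; rfl
  | cons k ks ih =>
    intro p hi
    have hki : k ≠ i := fun e => hi (e ▸ List.mem_cons_self)
    have hiks : i ∉ ks := fun h => hi (List.mem_cons_of_mem _ h)
    simp only [List.foldl_cons]
    rw [ih _ hiks, crsdStep_other q π c prefs p k i hki]

lemma crsdFoldl_congr {F L : Type} [Fintype F] [DecidableEq F] [DecidableEq L]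
    (q : L → ℕ) (π : F → L → ℝ) (c : ℝ) (prefs prefs' : F → List L) :
    ∀ (l : List F) (p : F → Option L), (∀ k ∈ l, prefs k = prefs' k) →
      l.foldl (crsdStep q π c prefs) p = l.foldl (crsdStep q π c prefs') p := by
  intro l
  induction l with
  | nil => intro p _; rfl
  | cons k ks ih =>
    intro p h
    simp only [List.foldl_cons]
    have hk : crsdStep q π c prefs p k = crsdStep q π c prefs' p k := by
      unfold crsdStep; rw [h k (List.mem_cons_self)]
    rw [hk]
    exact ih _ (fun k' hk' => h k' (List.mem_cons_of_mem _ hk'))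

/-- CRSD is family-strategyproof: for every family `i`, every profile of the
others' preferences, every order of families, and every (complete) misreport, the location
received when reporting truthfully is weakly preferred (w.r.t. `i`'s true order) to the
location received under the misreport. -/
theorem crsd_family_strategyproof
    {F L : Type} [Fintype F] [Fintype L] [DecidableEq F] [DecidableEq L]
    (q : L → ℕ) (π : F → L → ℝ) (prefs : F → List L) (α zs : ℝ)
    (hq : ∑ j, q j = Fintype.card F)
    (hπ : ∀ i j, π i j ∈ Set.Icc (0 : ℝ) 1)
    (hα : α ∈ Set.Icc (0 : ℝ) 1)
    (hzs : IsGreatest {x : ℝ | ∃ μ : F → L, feasible q μ ∧ x = z π μ} zs)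
    (hprefs : ∀ i, (prefs i).Nodup ∧ ∀ j : L, j ∈ prefs i)
    (order : List F) (horder : order.Nodup) (hall : ∀ i : F, i ∈ order)
    (i : F) (lie : List L) (hlie : lie.Nodup ∧ ∀ j : L, j ∈ lie)
    (jTrue jLie : L)
    (hTrue : crsdRun q π (α * zs) prefs order i = some jTrue)
    (hLie : crsdRun q π (α * zs) (Function.update prefs i lie) order i = some jLie) :
    (prefs i).idxOf jTrue ≤ (prefs i).idxOf jLie := by
  set c := α * zs with hc
  obtain ⟨l₁, l₂, horde⟩ := List.append_of_mem (hall i)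
  subst horde
  have hnd := (List.nodup_middle).mp horder
  have hiout : i ∉ l₁ ++ l₂ := (List.nodup_cons.mp hnd).1
  have hi1 : i ∉ l₁ := fun h => hiout (List.mem_append.mpr (Or.inl h))
  have hi2 : i ∉ l₂ := fun h => hiout (List.mem_append.mpr (Or.inr h))
  set prefs' := Function.update prefs i lie with hp'
  have hcongr : ∀ k ∈ l₁, prefs k = prefs' k := by
    intro k hk
    have : k ≠ i := fun e => hi1 (e ▸ hk)
    simp [hp', Function.update_of_ne this]
  -- state before i's turn
  set p : F → Option L := l₁.foldl (crsdStep q π c prefs) (fun _ => none) with hpdef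
  have hp' : l₁.foldl (crsdStep q π c prefs') (fun _ => none) = p := by
    rw [← crsdFoldl_congr q π c prefs prefs' l₁ _ hcongr]
  have hpi : p i = none := crsdFoldl_other q π c prefs i l₁ _ hi1
  -- unfold the runs
  have hT : crsdStep q π c prefs p i i = some jTrue := by
    have : crsdRun q π c prefs (l₁ ++ i :: l₂) i
        = l₂.foldl (crsdStep q π c prefs) (crsdStep q π c prefs p i) i := by
      simp [crsdRun, List.foldl_append, hpdef]
    rw [this, crsdFoldl_other q π c prefs i l₂ _ hi2] at hTrue
    exact hTrue
  have hL : crsdStep q π c prefs' p i i = some jLie := by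
    have : crsdRun q π c prefs' (l₁ ++ i :: l₂) i
        = l₂.foldl (crsdStep q π c prefs') (crsdStep q π c prefs' p i) i := by
      simp [crsdRun, List.foldl_append, hp']
    rw [this, crsdFoldl_other q π c prefs' i l₂ _ hi2] at hLie
    exact hLie
  set P : L → Bool := fun j =>
    decide (assignedCount p j < q j ∧ okExt q π c (Function.update p i (some j))) with hP
  -- truthful step
  have hfindT : (prefs i).find? P = some jTrue := by
    unfold crsdStep at hT
    cases h : (prefs i).find? P with
    | none =>
      rw [hP] at h; rw [h] at hT
      have hT' : p i = some jTrue := hT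
      rw [hpi] at hT'; exact absurd hT' (by simp)
    | some j =>
      rw [hP] at h; rw [h] at hT
      have hT' : Function.update p i (some j) i = some jTrue := hT
      rw [Function.update_self] at hT'
      cases hT'; rfl
  have hfindL : lie.find? P = some jLie := by
    unfold crsdStep at hL
    have hplie : prefs' i = lie := Function.update_self _ _ _
    rw [hplie] at hL
    cases h : lie.find? P with
    | none =>
      rw [hP] at h; rw [h] at hL
      have hL' : p i = some jLie := hL
      rw [hpi] at hL'; exact absurd hL' (by simp)
    | some j =>
      rw [hP] at h; rw [h] at hL
      have hL' : Function.update p i (some j) i = some jLie := hL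
      rw [Function.update_self] at hL'
      cases hL'; rfl
  have hPjLie : P jLie = true := List.find?_some hfindL
  exact find?_idxOf_le P (prefs i) jTrue jLie hfindT ((hprefs i).2 jLie) hPjLie
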